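/- Composite pre-change coverage guarantee: suppose the pre-change class 𝒫₀ and the change detection stopping time τ satisfy Assumption 1 with least favorable element F₀* ∈ 𝒫₀, and that P_{F₀,∞}(τ ≥ T) > 0 for all F₀ ∈ 𝒫₀. Then for every α ∈ (0,1), every T ∈ ℕ, and every post-change class 𝒫₁, the confidence set C := {t ∈ ℕ : t ≤ τ, M_t < 2/(α r_t*)}, constructed with any family (r_t*) of almost surely strictly positive random variables, each independent of the observed data, satisfying E[r_t*] = P_{F₀*,∞}(τ ≥ t), satisfies P_{F₀,T,F₁}(T ∈ C | τ ≥ T) ≥ 1 − α for all F₀ ∈ 𝒫₀ and F₁ ∈ 𝒫₁. -/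

import Mathlib

open MeasureTheory ProbabilityTheory Filter Set
open scoped ENNReal NNReal

namespace SeqChange

variable {𝒳 : Type*} [MeasurableSpace 𝒳]

/-- The σ-algebra on the sequence space generated by the coordinates with indices in `s`. -/
def coordSigma (𝒳 : Type*) [MeasurableSpace 𝒳] (s : Set ℕ) : MeasurableSpace (ℕ → 𝒳) :=
  ⨆ i ∈ s, MeasurableSpace.comap (fun ω : ℕ → 𝒳 => ω i) inferInstance

/-- The natural filtration `σ(X₁, …, Xₙ)` of the observation sequence (observations are
indexed from 1; coordinate 0 is unused). -/
def natFilt (𝒳 : Type*) [MeasurableSpace 𝒳] (n : ℕ) : MeasurableSpace (ℕ → 𝒳) :=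
  coordSigma 𝒳 {i | 1 ≤ i ∧ i ≤ n}

/-- `τ` is a stopping time with respect to the natural filtration of the observation
sequence, taking values in `ℕ ∪ {∞}`. -/
def IsStoppingTimeSeq (τ : (ℕ → 𝒳) → ℕ∞) : Prop :=
  ∀ n : ℕ, MeasurableSet[natFilt 𝒳 n] {ω | τ ω ≤ (n : ℕ∞)}

/-- `P` is the joint law of a sequence of independent observations `X₁, X₂, …` with
`Xₙ ~ ν n` for every `n ≥ 1`: a probability measure whose finite-dimensional
distributions on the coordinates with indices `≥ 1` are the corresponding products. -/
def IsProductLaw (P : Measure (ℕ → 𝒳)) (ν : ℕ → Measure 𝒳) : Prop :=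
  IsProbabilityMeasure P ∧
    ∀ s : Finset ℕ, (∀ i ∈ s, 1 ≤ i) → ∀ A : ℕ → Set 𝒳, (∀ i, MeasurableSet (A i)) →
      P {ω | ∀ i ∈ s, ω i ∈ A i} = ∏ i ∈ s, ν i (A i)

/-- `P` is the law `P_{F₀,T,F₁}`: independent coordinates, `Xₙ ~ F₀` for `n < T` and
`Xₙ ~ F₁` for `n ≥ T`. -/
def IsChangeLaw (P : Measure (ℕ → 𝒳)) (F₀ F₁ : Measure 𝒳) (T : ℕ) : Prop :=
  IsProductLaw P (fun n => if n < T then F₀ else F₁)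

/-- `P` is the law `P_{F₀,∞}`: all coordinates i.i.d. `F₀` (no change ever occurs). -/
def IsNoChangeLaw (P : Measure (ℕ → 𝒳)) (F₀ : Measure 𝒳) : Prop :=
  IsProductLaw P (fun _ => F₀)

/-- Under `Q`, the coordinates with indices in `I` are i.i.d. with law `ν`. -/
def IsIIDOn (Q : Measure (ℕ → 𝒳)) (ν : Measure 𝒳) (I : Set ℕ) : Prop :=
  IsProbabilityMeasure Q ∧
    ∀ s : Finset ℕ, (↑s ⊆ I) → ∀ A : ℕ → Set 𝒳, (∀ i, MeasurableSet (A i)) →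
      Q {ω | ∀ i ∈ s, ω i ∈ A i} = ∏ i ∈ s, ν (A i)

/-- Forward filtration `σ(X_t, …, X_n)`. -/
def fwdFilt (𝒳 : Type*) [MeasurableSpace 𝒳] (t n : ℕ) : MeasurableSpace (ℕ → 𝒳) :=
  coordSigma 𝒳 {i | t ≤ i ∧ i ≤ n}

/-- Backward filtration `σ(X_n, …, X_{t-1})`. -/
def bwdFilt (𝒳 : Type*) [MeasurableSpace 𝒳] (t n : ℕ) : MeasurableSpace (ℕ → 𝒳) :=
  coordSigma 𝒳 {i | n ≤ i ∧ i < t}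

/-- A forward `t`-delay e-process under the class `𝒫₁`: a nonnegative process
`(R n)_{n ≥ t}` adapted to the forward filtration `σ(X_t, …, X_n)` such that for every
`F₁ ∈ 𝒫₁`, every law `Q` under which `X_t, X_{t+1}, …` are i.i.d. `F₁`, and every
stopping time `κ ≥ t` of the forward filtration, `E_Q[R_κ] ≤ 1`. -/
def IsForwardEProcess (𝒫₁ : Set (Measure 𝒳)) (t : ℕ) (R : ℕ → (ℕ → 𝒳) → ℝ≥0∞) : Prop :=
  (∀ n, t ≤ n → Measurable[fwdFilt 𝒳 t n] (R n)) ∧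
    ∀ F₁ ∈ 𝒫₁, ∀ Q : Measure (ℕ → 𝒳), IsIIDOn Q F₁ {i | t ≤ i} →
      ∀ κ : (ℕ → 𝒳) → ℕ, (∀ ω, t ≤ κ ω) →
        (∀ n, MeasurableSet[fwdFilt 𝒳 t n] {ω | κ ω ≤ n}) →
        ∫⁻ ω, R (κ ω) ω ∂Q ≤ 1

/-- A backward `t`-delay e-process under the class `𝒫₀`: a nonnegative process
`(S n)_{1 ≤ n < t}` adapted to the backward filtration `σ(X_n, …, X_{t-1})` such that for
every `F₀ ∈ 𝒫₀`, every law `Q` under which `X₁, …, X_{t-1}` are i.i.d. `F₀`, and every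
stopping time `κ` of the backward filtration with `1 ≤ κ < t`, `E_Q[S_κ] ≤ 1`. -/
def IsBackwardEProcess (𝒫₀ : Set (Measure 𝒳)) (t : ℕ) (S : ℕ → (ℕ → 𝒳) → ℝ≥0∞) : Prop :=
  (∀ n, 1 ≤ n → n < t → Measurable[bwdFilt 𝒳 t n] (S n)) ∧
    ∀ F₀ ∈ 𝒫₀, ∀ Q : Measure (ℕ → 𝒳), IsIIDOn Q F₀ {i | 1 ≤ i ∧ i < t} →
      ∀ κ : (ℕ → 𝒳) → ℕ, (∀ ω, 1 ≤ κ ω ∧ κ ω < t) →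
        (∀ n, MeasurableSet[bwdFilt 𝒳 t n] {ω | n ≤ κ ω}) →
        ∫⁻ ω, S (κ ω) ω ∂Q ≤ 1

/-- The localization statistic `M_t` built from the estimator `T̂`, forward e-processes `R`
and backward e-processes `S`: `M_t = R^{(t)}_{T̂ - 1}` if `t < T̂ ≤ τ < ∞`, `M_t = 1` if
`t = T̂ ≤ τ < ∞`, `M_t = S^{(t)}_{T̂}` if `T̂ < t ≤ τ < ∞`, and `M_t = -∞` if `t > τ` or
`τ = ∞`. -/
noncomputable def eStat (τ : (ℕ → 𝒳) → ℕ∞) (That : (ℕ → 𝒳) → ℕ)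
    (R S : ℕ → ℕ → (ℕ → 𝒳) → ℝ≥0∞) (t : ℕ) (ω : ℕ → 𝒳) : EReal :=
  if (t : ℕ∞) ≤ τ ω ∧ τ ω ≠ ⊤ then
    if t < That ω then ((R t (That ω - 1) ω : ℝ≥0∞) : EReal)
    else if t = That ω then 1
    else ((S t (That ω) ω : ℝ≥0∞) : EReal)
  else ⊥

lemma coordSigma_le (s : Set ℕ) : coordSigma 𝒳 s ≤ (inferInstance : MeasurableSpace (ℕ → 𝒳)) := by
  refine iSup₂_le fun i _ => ?_
  exact measurable_iff_comap_le.mp (measurable_pi_apply i)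

lemma measurableSet_of_coordSigma {s : Set ℕ} {U : Set (ℕ → 𝒳)}
    (h : MeasurableSet[coordSigma 𝒳 s] U) : MeasurableSet U :=
  coordSigma_le (𝒳 := 𝒳) s U h

lemma coordSigma_mono {s t : Set ℕ} (h : s ⊆ t) : coordSigma 𝒳 s ≤ coordSigma 𝒳 t := by
  refine iSup₂_le fun i hi => ?_
  exact le_iSup₂ (f := fun i (_ : i ∈ t) =>
    MeasurableSpace.comap (fun ω : ℕ → 𝒳 => ω i) inferInstance) i (h hi)

/-- the π-system of cylinder sets over coordinates in `I` -/
def cylSets (𝒳 : Type*) [MeasurableSpace 𝒳] (I : Set ℕ) : Set (Set (ℕ → 𝒳)) :=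
  {U | ∃ (s : Finset ℕ) (A : ℕ → Set 𝒳), ↑s ⊆ I ∧ (∀ i, MeasurableSet (A i)) ∧
    U = {ω : ℕ → 𝒳 | ∀ i ∈ s, ω i ∈ A i}}

lemma coordSigma_eq_generateFrom (I : Set ℕ) :
    coordSigma 𝒳 I = MeasurableSpace.generateFrom (cylSets 𝒳 I) := by
  apply le_antisymm
  · refine iSup₂_le fun i hi => ?_
    intro U hU
    obtain ⟨A, hA, rfl⟩ := hU
    apply MeasurableSpace.measurableSet_generateFrom
    refine ⟨{i}, fun _ => A, by simpa using hi, fun _ => hA, ?_⟩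
    ext ω; simp
  · refine MeasurableSpace.generateFrom_le fun U hU => ?_
    obtain ⟨s, A, hsI, hA, rfl⟩ := hU
    have hrw : {ω : ℕ → 𝒳 | ∀ i ∈ s, ω i ∈ A i} = ⋂ i ∈ s, (fun ω : ℕ → 𝒳 => ω i) ⁻¹' A i := by
      ext ω; simp
    rw [hrw]
    refine MeasurableSet.biInter s.countable_toSet fun i hi => ?_
    have hle : MeasurableSpace.comap (fun ω : ℕ → 𝒳 => ω i) inferInstance ≤ coordSigma 𝒳 I :=
      le_iSup₂ (f := fun i (_ : i ∈ I) =>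
        MeasurableSpace.comap (fun ω : ℕ → 𝒳 => ω i) inferInstance) i (hsI hi)
    exact hle _ ⟨A i, hA i, rfl⟩

lemma isPiSystem_cylSets (I : Set ℕ) : IsPiSystem (cylSets 𝒳 I) := by
  classical
  rintro U ⟨s₁, A₁, hs₁, hA₁, rfl⟩ V ⟨s₂, A₂, hs₂, hA₂, rfl⟩ -
  refine ⟨s₁ ∪ s₂, fun i =>
    (if i ∈ s₁ then A₁ i else univ) ∩ (if i ∈ s₂ then A₂ i else univ), ?_, ?_, ?_⟩
  · intro i hi
    rcases Finset.mem_union.1 hi with h | h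
    exacts [hs₁ h, hs₂ h]
  · intro i
    refine MeasurableSet.inter ?_ ?_ <;> split_ifs <;>
      first | exact hA₁ i | exact hA₂ i | exact MeasurableSet.univ
  · ext ω
    simp only [mem_inter_iff, mem_setOf_eq, Finset.mem_union]
    constructor
    · rintro ⟨h1, h2⟩ i hi
      constructor <;> split_ifs with h
      · exact h1 i h
      · exact mem_univ _
      · exact h2 i h
      · exact mem_univ _
    · intro h
      constructor
      · intro i hi
        have := (h i (Or.inl hi)).1
        rwa [if_pos hi] at this
      · intro i hi
        have := (h i (Or.inr hi)).2
        rwa [if_pos hi] at this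

lemma measure_eq_on_coordSigma {I : Set ℕ} {P Q : Measure (ℕ → 𝒳)}
    [IsProbabilityMeasure P] [IsProbabilityMeasure Q]
    (h : ∀ s : Finset ℕ, ↑s ⊆ I → ∀ A : ℕ → Set 𝒳, (∀ i, MeasurableSet (A i)) →
      P {ω | ∀ i ∈ s, ω i ∈ A i} = Q {ω | ∀ i ∈ s, ω i ∈ A i})
    {U : Set (ℕ → 𝒳)} (hU : MeasurableSet[coordSigma 𝒳 I] U) : P U = Q U := by
  refine MeasurableSpace.induction_on_inter (C := fun U _ => P U = Q U)
    (coordSigma_eq_generateFrom I) (isPiSystem_cylSets I) (by simp) ?_ ?_ ?_ U hU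
  · rintro U ⟨s, A, hsI, hA, rfl⟩
    exact h s hsI A hA
  · intro t ht hPQ
    have htm : MeasurableSet t := measurableSet_of_coordSigma ht
    rw [measure_compl htm (measure_ne_top P t), measure_compl htm (measure_ne_top Q t),
      measure_univ, measure_univ, hPQ]
  · intro f hdisj hmeas hPQ
    rw [measure_iUnion hdisj fun i => measurableSet_of_coordSigma (hmeas i),
      measure_iUnion hdisj fun i => measurableSet_of_coordSigma (hmeas i)]
    exact tsum_congr hPQ

lemma coe_le_coe_ennreal {x : ℝ} {y : ℝ≥0∞} (h : (x : EReal) ≤ (y : EReal)) :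
    ENNReal.ofReal x ≤ y := by
  rw [← EReal.coe_ennreal_le_coe_ennreal_iff, EReal.coe_ennreal_ofReal]
  exact max_le h (EReal.coe_ennreal_nonneg y)


lemma ville_fwd {𝒫₁ : Set (Measure 𝒳)} {t : ℕ} {R : ℕ → (ℕ → 𝒳) → ℝ≥0∞}
    (hRe : IsForwardEProcess 𝒫₁ t R) {F₁ : Measure 𝒳} (hF₁ : F₁ ∈ 𝒫₁)
    {Q : Measure (ℕ → 𝒳)} (hQ : IsIIDOn Q F₁ {i | t ≤ i}) (c : ℝ≥0∞) :
    c * Q {ω | ∃ n, t ≤ n ∧ c ≤ R n ω} ≤ 1 := by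
  classical
  set G : ℕ → Set (ℕ → 𝒳) := fun N => {ω | ∃ n, t ≤ n ∧ n ≤ t + N ∧ c ≤ R n ω} with hG
  have hRamb : ∀ m, t ≤ m → Measurable (R m) := fun m hm =>
    ((hRe.1 m hm).mono (coordSigma_le _) le_rfl)
  have hGmeas : ∀ N, MeasurableSet (G N) := by
    intro N
    have : G N = ⋃ m, ⋃ (_ : t ≤ m ∧ m ≤ t + N), {ω | c ≤ R m ω} := by
      ext ω; simp only [hG, mem_setOf_eq, mem_iUnion]; tauto
    rw [this]
    exact MeasurableSet.iUnion fun m => MeasurableSet.iUnion fun hm =>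
      (hRamb m hm.1) measurableSet_Ici
  have key : ∀ N, c * Q (G N) ≤ 1 := by
    intro N
    set H : (ℕ → 𝒳) → Set ℕ := fun ω => {n | t ≤ n ∧ n ≤ t + N ∧ c ≤ R n ω} with hH
    set κ : (ℕ → 𝒳) → ℕ := fun ω => if h : (H ω).Nonempty then sInf (H ω) else t + N with hκ
    have hκmem : ∀ ω, (H ω).Nonempty → κ ω ∈ H ω := by
      intro ω h
      rw [hκ]; simp only [dif_pos h]
      exact Nat.sInf_mem h
    have hκt : ∀ ω, t ≤ κ ω := by
      intro ω
      by_cases h : (H ω).Nonempty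
      · exact (hκmem ω h).1
      · simp only [hκ, dif_neg h]; exact Nat.le_add_right t N
    have hκle : ∀ ω, κ ω ≤ t + N := by
      intro ω
      by_cases h : (H ω).Nonempty
      · exact (hκmem ω h).2.1
      · simp only [hκ, dif_neg h]; exact le_rfl
    have hκstop : ∀ n, MeasurableSet[fwdFilt 𝒳 t n] {ω | κ ω ≤ n} := by
      intro n
      by_cases hn : t + N ≤ n
      · have : {ω | κ ω ≤ n} = univ := eq_univ_of_forall fun ω => (hκle ω).trans hn
        rw [this]; exact MeasurableSet.univ
      · push_neg at hn
        have hset : {ω | κ ω ≤ n} = ⋃ m, ⋃ (_ : t ≤ m ∧ m ≤ n), {ω | c ≤ R m ω} := by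
          ext ω
          simp only [mem_setOf_eq, mem_iUnion]
          constructor
          · intro hκn
            by_cases h : (H ω).Nonempty
            · obtain ⟨h1, h2, h3⟩ := hκmem ω h
              exact ⟨κ ω, ⟨h1, by simpa [hκ, dif_pos h] using hκn⟩, h3⟩
            · exfalso
              rw [hκ] at hκn; simp only [dif_neg h] at hκn; omega
          · rintro ⟨m, ⟨hm1, hm2⟩, hm3⟩
            have hmem : m ∈ H ω := ⟨hm1, by omega, hm3⟩
            have hne : (H ω).Nonempty := ⟨m, hmem⟩
            rw [hκ]; simp only [dif_pos hne]
            exact le_trans (Nat.sInf_le hmem) hm2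
        rw [hset]
        refine MeasurableSet.iUnion fun m => MeasurableSet.iUnion fun hm => ?_
        have hle : fwdFilt 𝒳 t m ≤ fwdFilt 𝒳 t n :=
          coordSigma_mono fun i hi => ⟨hi.1, hi.2.trans hm.2⟩
        exact hle _ ((hRe.1 m hm.1) measurableSet_Ici)
    have hE : ∫⁻ ω, R (κ ω) ω ∂Q ≤ 1 := hRe.2 F₁ hF₁ Q hQ κ hκt hκstop
    calc c * Q (G N) = ∫⁻ ω, (G N).indicator (fun _ => c) ω ∂Q := by
          rw [lintegral_indicator_const (hGmeas N)]
      _ ≤ ∫⁻ ω, R (κ ω) ω ∂Q := by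
          refine lintegral_mono fun ω => ?_
          by_cases hω : ω ∈ G N
          · rw [indicator_of_mem hω]
            obtain ⟨n, h1, h2, h3⟩ := hω
            exact (hκmem ω ⟨n, h1, h2, h3⟩).2.2
          · rw [indicator_of_notMem hω]; exact zero_le
      _ ≤ 1 := hE
  have hunion : {ω | ∃ n, t ≤ n ∧ c ≤ R n ω} = ⋃ N, G N := by
    ext ω
    simp only [mem_setOf_eq, mem_iUnion, hG]
    constructor
    · rintro ⟨n, h1, h2⟩; exact ⟨n, n, h1, Nat.le_add_left n t, h2⟩
    · rintro ⟨N, n, h1, _, h3⟩; exact ⟨n, h1, h3⟩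
  have hmono : Monotone G := by
    intro N M hNM ω
    rintro ⟨n, h1, h2, h3⟩
    exact ⟨n, h1, by omega, h3⟩
  rw [hunion, hmono.directed_le.measure_iUnion, ENNReal.mul_iSup]
  exact iSup_le key

lemma ville_bwd {𝒫₀ : Set (Measure 𝒳)} {t : ℕ} {S : ℕ → (ℕ → 𝒳) → ℝ≥0∞}
    (hSe : IsBackwardEProcess 𝒫₀ t S) (ht : 2 ≤ t) {F₀ : Measure 𝒳} (hF₀ : F₀ ∈ 𝒫₀)
    {Q : Measure (ℕ → 𝒳)} (hQ : IsIIDOn Q F₀ {i | 1 ≤ i ∧ i < t}) (c : ℝ≥0∞) :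
    c * Q {ω | ∃ n, 1 ≤ n ∧ n < t ∧ c ≤ S n ω} ≤ 1 := by
  classical
  set GS : Set (ℕ → 𝒳) := {ω | ∃ n, 1 ≤ n ∧ n < t ∧ c ≤ S n ω} with hGS
  have hSamb : ∀ m, 1 ≤ m → m < t → Measurable (S m) := fun m h1 h2 =>
    ((hSe.1 m h1 h2).mono (coordSigma_le _) le_rfl)
  have hGSmeas : MeasurableSet GS := by
    have : GS = ⋃ m, ⋃ (_ : 1 ≤ m ∧ m < t), {ω | c ≤ S m ω} := by
      ext ω; simp only [hGS, mem_setOf_eq, mem_iUnion]; tauto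
    rw [this]
    exact MeasurableSet.iUnion fun m => MeasurableSet.iUnion fun hm =>
      (hSamb m hm.1 hm.2) measurableSet_Ici
  set H : (ℕ → 𝒳) → Set ℕ := fun ω => {n | 1 ≤ n ∧ n < t ∧ c ≤ S n ω} with hH
  set κ : (ℕ → 𝒳) → ℕ := fun ω => if h : (H ω).Nonempty then sSup (H ω) else 1 with hκ
  have hbdd : ∀ ω, BddAbove (H ω) := fun ω => ⟨t, fun n hn => hn.2.1.le⟩
  have hκmem : ∀ ω, (H ω).Nonempty → κ ω ∈ H ω := by
    intro ω h
    rw [hκ]; simp only [dif_pos h]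
    exact Nat.sSup_mem h (hbdd ω)
  have hκrange : ∀ ω, 1 ≤ κ ω ∧ κ ω < t := by
    intro ω
    by_cases h : (H ω).Nonempty
    · exact ⟨(hκmem ω h).1, (hκmem ω h).2.1⟩
    · simp only [hκ, dif_neg h]; omega
  have hκstop : ∀ n, MeasurableSet[bwdFilt 𝒳 t n] {ω | n ≤ κ ω} := by
    intro n
    by_cases hn : n ≤ 1
    · have : {ω | n ≤ κ ω} = univ := eq_univ_of_forall fun ω => le_trans hn (hκrange ω).1
      rw [this]; exact MeasurableSet.univ
    · push_neg at hn
      have hset : {ω | n ≤ κ ω} = ⋃ m, ⋃ (_ : n ≤ m ∧ m < t), {ω | c ≤ S m ω} := by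
        ext ω
        simp only [mem_setOf_eq, mem_iUnion]
        constructor
        · intro hκn
          by_cases h : (H ω).Nonempty
          · obtain ⟨h1, h2, h3⟩ := hκmem ω h
            exact ⟨κ ω, ⟨hκn, h2⟩, h3⟩
          · exfalso
            rw [hκ] at hκn; simp only [dif_neg h] at hκn; omega
        · rintro ⟨m, ⟨hm1, hm2⟩, hm3⟩
          have hmem : m ∈ H ω := ⟨by omega, hm2, hm3⟩
          have hne : (H ω).Nonempty := ⟨m, hmem⟩
          rw [hκ]; simp only [dif_pos hne]
          exact le_trans hm1 (le_csSup (hbdd ω) hmem)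
      rw [hset]
      refine MeasurableSet.iUnion fun m => MeasurableSet.iUnion fun hm => ?_
      have hle : bwdFilt 𝒳 t m ≤ bwdFilt 𝒳 t n :=
        coordSigma_mono fun i hi => ⟨le_trans hm.1 hi.1, hi.2⟩
      have h1m : 1 ≤ m := by omega
      exact hle _ ((hSe.1 m h1m hm.2) measurableSet_Ici)
  have hE : ∫⁻ ω, S (κ ω) ω ∂Q ≤ 1 := hSe.2 F₀ hF₀ Q hQ κ hκrange hκstop
  calc c * Q GS = ∫⁻ ω, GS.indicator (fun _ => c) ω ∂Q := by
        rw [lintegral_indicator_const hGSmeas]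
    _ ≤ ∫⁻ ω, S (κ ω) ω ∂Q := by
        refine lintegral_mono fun ω => ?_
        by_cases hω : ω ∈ GS
        · rw [indicator_of_mem hω]
          obtain ⟨n, h1, h2, h3⟩ := hω
          exact (hκmem ω ⟨n, h1, h2, h3⟩).2.2
        · rw [indicator_of_notMem hω]; exact zero_le
    _ ≤ 1 := hE

/-- Composite pre-change coverage guarantee: suppose the pre-change class
`𝒫₀` and the stopping time `τ` satisfy Assumption 1 with least favorable element
`F₀* ∈ 𝒫₀` (i.e. `P_{F₀,∞}(τ ≥ t) ≥ P_{F₀*,∞}(τ ≥ t)` for all `F₀ ∈ 𝒫₀` and `t`), and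
`P_{F₀,∞}(τ ≥ T) > 0` for all `F₀ ∈ 𝒫₀`. Then for every `α ∈ (0,1)`, `T`, and post-change
class `𝒫₁`, the confidence set `C = {t ≤ τ : M_t < 2/(α r_t*)}` built from any
data-independent, a.s. strictly positive, unbiased estimators `r_t*` of
`P_{F₀*,∞}(τ ≥ t)` satisfies `P_{F₀,T,F₁}(T ∈ C | τ ≥ T) ≥ 1 − α` for all `F₀ ∈ 𝒫₀`,
`F₁ ∈ 𝒫₁`. -/
theorem composite_prechange_coverage
    {𝒳 : Type*} [MeasurableSpace 𝒳]
    (𝒫₀ 𝒫₁ : Set (Measure 𝒳)) (hdisj : Disjoint 𝒫₀ 𝒫₁)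
    (τ : (ℕ → 𝒳) → ℕ∞) (hτ : IsStoppingTimeSeq τ)
    (That : (ℕ → 𝒳) → ℕ) (hThatMeas : Measurable That)
    (hThat : ∀ ω, τ ω ≠ ⊤ → 1 ≤ That ω ∧ (That ω : ℕ∞) ≤ τ ω)
    (R S : ℕ → ℕ → (ℕ → 𝒳) → ℝ≥0∞)
    (hR : ∀ t : ℕ, 1 ≤ t → IsForwardEProcess 𝒫₁ t (R t))
    (hS : ∀ t : ℕ, 1 ≤ t → IsBackwardEProcess 𝒫₀ t (S t))
    (α : ℝ) (hα : α ∈ Set.Ioo (0 : ℝ) 1)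
    (T : ℕ) (hT : 1 ≤ T)
    -- Assumption 1: least favorable element of the pre-change class
    (F₀s : Measure 𝒳) (hF₀s : F₀s ∈ 𝒫₀)
    (Pinfs : Measure (ℕ → 𝒳)) (hPinfs : IsNoChangeLaw Pinfs F₀s)
    (hass1 : ∀ F₀ ∈ 𝒫₀, ∀ t : ℕ, ∀ Pinf : Measure (ℕ → 𝒳), IsNoChangeLaw Pinf F₀ →
      Pinfs {ω | (t : ℕ∞) ≤ τ ω} ≤ Pinf {ω | (t : ℕ∞) ≤ τ ω})
    -- the auxiliary randomization carrying the estimators `r_t*`, independent of the data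
    {Ωa : Type*} [MeasurableSpace Ωa] (μa : Measure Ωa) [IsProbabilityMeasure μa]
    (r : ℕ → Ωa → ℝ) (hrmeas : ∀ t, Measurable (r t))
    (hrpos : ∀ t, ∀ᵐ a ∂μa, 0 < r t a) (hrint : ∀ t, Integrable (r t) μa)
    (hrunb : ∀ t : ℕ, ∫ a, r t a ∂μa = (Pinfs {ω | (t : ℕ∞) ≤ τ ω}).toReal)
    (F₀ : Measure 𝒳) (hF₀ : F₀ ∈ 𝒫₀) (F₁ : Measure 𝒳) (hF₁ : F₁ ∈ 𝒫₁)
    (Pinf : Measure (ℕ → 𝒳)) (hPinf : IsNoChangeLaw Pinf F₀)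
    (hpos : Pinf {ω | (T : ℕ∞) ≤ τ ω} ≠ 0)
    (P : Measure (ℕ → 𝒳)) (hP : IsChangeLaw P F₀ F₁ T) :
    ENNReal.ofReal (1 - α) ≤
      ProbabilityTheory.cond (P.prod μa) {q : (ℕ → 𝒳) × Ωa | (T : ℕ∞) ≤ τ q.1}
        {q : (ℕ → 𝒳) × Ωa |
          T ∈ {t : ℕ | 1 ≤ t ∧ (t : ℕ∞) ≤ τ q.1 ∧
            eStat τ That R S t q.1 < ((2 / (α * r t q.2) : ℝ) : EReal)}} := by
  classical
  obtain ⟨hα0, hα1⟩ := hα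
  haveI hPprob : IsProbabilityMeasure P := hP.1
  haveI : IsProbabilityMeasure Pinf := hPinf.1
  haveI : IsProbabilityMeasure Pinfs := hPinfs.1
  -- the conditioning event
  set Bω : Set (ℕ → 𝒳) := {ω | (T : ℕ∞) ≤ τ ω} with hBωdef
  have hBcompl : Bω = {ω | τ ω ≤ ((T - 1 : ℕ) : ℕ∞)}ᶜ := by
    ext ω
    simp only [hBωdef, mem_setOf_eq, mem_compl_iff, not_le]
    have hcast : ((T : ℕ) : ℕ∞) = ((T - 1 : ℕ) : ℕ∞) + 1 := by
      have hTT : T = (T - 1) + 1 := by omega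
      exact_mod_cast congrArg (Nat.cast : ℕ → ℕ∞) hTT
    rw [hcast, ENat.add_one_le_iff (by simp : ((T - 1 : ℕ) : ℕ∞) ≠ ⊤)]
  have hBmeasω : MeasurableSet Bω := by
    rw [hBcompl]
    exact (measurableSet_of_coordSigma (hτ (T - 1))).compl
  -- P and Pinf agree on the pre-change σ-algebra, hence on Bω
  have hPB : P Bω = Pinf Bω := by
    have hc : P {ω | τ ω ≤ ((T - 1 : ℕ) : ℕ∞)} = Pinf {ω | τ ω ≤ ((T - 1 : ℕ) : ℕ∞)} := by
      refine measure_eq_on_coordSigma (I := {i | 1 ≤ i ∧ i ≤ T - 1}) ?_ (hτ (T - 1))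
      intro s hs A hA
      rw [hP.2 s (fun i hi => (hs hi).1) A hA, hPinf.2 s (fun i hi => (hs hi).1) A hA]
      refine Finset.prod_congr rfl fun i hi => ?_
      have h2 := (hs hi).2
      have hiT : i < T := by omega
      simp [hiT]
    rw [hBcompl, measure_compl (measurableSet_of_coordSigma (hτ (T - 1))) (measure_ne_top P _),
      measure_compl (measurableSet_of_coordSigma (hτ (T - 1))) (measure_ne_top Pinf _),
      measure_univ, measure_univ, hc]
  have hPinfsB : Pinfs Bω ≤ P Bω := by
    rw [hPB]; exact hass1 F₀ hF₀ T Pinf hPinf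
  have hPB0 : P Bω ≠ 0 := by rw [hPB]; exact hpos
  -- the iid structure of P before and after the change
  have hQfwd : IsIIDOn P F₁ {i | T ≤ i} := by
    refine ⟨hP.1, fun s hs A hA => ?_⟩
    rw [hP.2 s (fun i hi => le_trans hT (hs hi)) A hA]
    exact Finset.prod_congr rfl fun i hi => by
      have hiT : ¬ i < T := not_lt.2 (hs hi)
      simp [hiT]
  have hQbwd : IsIIDOn P F₀ {i | 1 ≤ i ∧ i < T} := by
    refine ⟨hP.1, fun s hs A hA => ?_⟩
    rw [hP.2 s (fun i hi => (hs hi).1) A hA]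
    exact Finset.prod_congr rfl fun i hi => by
      have hiT : i < T := (hs hi).2
      simp [hiT]
  -- the threshold function
  set cf : Ωa → ℝ := fun a => 2 / (α * r T a) with hcfdef
  have hcfmeas : Measurable cf := measurable_const.div ((hrmeas T).const_mul α)
  -- measurable pieces of the exceptional set
  have hRamb : ∀ n, T ≤ n → Measurable (R T n) := fun n hn =>
    (((hR T hT).1 n hn).mono (coordSigma_le _) le_rfl)
  have hSamb : ∀ n, 1 ≤ n → n < T → Measurable (S T n) := fun n h1 h2 =>
    (((hS T hT).1 n h1 h2).mono (coordSigma_le _) le_rfl)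
  set GRs : Set ((ℕ → 𝒳) × Ωa) :=
    {q | ∃ n, T ≤ n ∧ ENNReal.ofReal (cf q.2) ≤ R T n q.1} with hGRsdef
  set GSs : Set ((ℕ → 𝒳) × Ωa) :=
    {q | ∃ n, 1 ≤ n ∧ n < T ∧ ENNReal.ofReal (cf q.2) ≤ S T n q.1} with hGSsdef
  set D1 : Set ((ℕ → 𝒳) × Ωa) := {q | cf q.2 ≤ 1 ∧ (T : ℕ∞) ≤ τ q.1} with hD1def
  set D : Set ((ℕ → 𝒳) × Ωa) := {q | 0 < r T q.2} ∩ (D1 ∪ GRs ∪ GSs) with hDdef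
  set Z : Set Ωa := {a | ¬0 < r T a} with hZdef
  have hZmeas : MeasurableSet Z := ((hrmeas T) measurableSet_Ioi).compl
  have hZ0 : μa Z = 0 := by
    have := hrpos T
    rwa [ae_iff] at this
  have hcfa : Measurable fun q : (ℕ → 𝒳) × Ωa => ENNReal.ofReal (cf q.2) :=
    ENNReal.measurable_ofReal.comp (hcfmeas.comp measurable_snd)
  have hGRsmeas : MeasurableSet GRs := by
    have : GRs = ⋃ n, ⋃ (_ : T ≤ n),
        {q : (ℕ → 𝒳) × Ωa | ENNReal.ofReal (cf q.2) ≤ R T n q.1} := by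
      ext q; simp only [hGRsdef, mem_setOf_eq, mem_iUnion]; tauto
    rw [this]
    exact MeasurableSet.iUnion fun n => MeasurableSet.iUnion fun hn =>
      measurableSet_le hcfa ((hRamb n hn).comp measurable_fst)
  have hGSsmeas : MeasurableSet GSs := by
    have : GSs = ⋃ n, ⋃ (_ : 1 ≤ n ∧ n < T),
        {q : (ℕ → 𝒳) × Ωa | ENNReal.ofReal (cf q.2) ≤ S T n q.1} := by
      ext q; simp only [hGSsdef, mem_setOf_eq, mem_iUnion]; tauto
    rw [this]
    exact MeasurableSet.iUnion fun n => MeasurableSet.iUnion fun hn =>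
      measurableSet_le hcfa ((hSamb n hn.1 hn.2).comp measurable_fst)
  have hD1meas : MeasurableSet D1 := by
    have : D1 = ((cf ∘ Prod.snd) ⁻¹' Iic 1) ∩ (Prod.fst ⁻¹' Bω) := rfl
    rw [this]
    exact ((hcfmeas.comp measurable_snd) measurableSet_Iic).inter
      (hBmeasω.preimage measurable_fst)
  have hDmeas : MeasurableSet D :=
    (((hrmeas T).comp measurable_snd) measurableSet_Ioi).inter
      ((hD1meas.union hGRsmeas).union hGSsmeas)
  -- the slice bound
  have hslice : ∀ a, P {ω | (ω, a) ∈ D} ≤ ENNReal.ofReal (α * r T a) := by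
    intro a
    by_cases hra : 0 < r T a
    swap
    · have : {ω | (ω, a) ∈ D} = ∅ := by
        ext ω; simp only [hDdef, mem_inter_iff, mem_setOf_eq, mem_empty_iff_false, iff_false]
        intro h; exact hra h.1
      simp [this]
    · have hαr : 0 < α * r T a := mul_pos hα0 hra
      by_cases hc1 : cf a ≤ 1
      · have h2 : 2 ≤ α * r T a := by
          rw [hcfdef] at hc1
          simp only at hc1
          rw [div_le_one hαr] at hc1
          exact hc1
        calc P {ω | (ω, a) ∈ D} ≤ 1 := prob_le_one
          _ = ENNReal.ofReal 1 := by simp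
          _ ≤ ENNReal.ofReal (α * r T a) := ENNReal.ofReal_le_ofReal (by linarith)
      · push_neg at hc1
        have hcpos : 0 < cf a := lt_trans one_pos hc1
        set ce : ℝ≥0∞ := ENNReal.ofReal (cf a) with hcedef
        have hce0 : ce ≠ 0 := by
          simp only [hcedef, ne_eq, ENNReal.ofReal_eq_zero, not_le]; exact hcpos
        have hcetop : ce ≠ ⊤ := ENNReal.ofReal_ne_top
        have hsub2 : {ω | (ω, a) ∈ D} ⊆
            {ω | ∃ n, T ≤ n ∧ ce ≤ R T n ω} ∪ {ω | ∃ n, 1 ≤ n ∧ n < T ∧ ce ≤ S T n ω} := by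
          rintro ω ⟨-, h⟩
          rcases h with (h | h) | h
          · exact absurd h.1 (not_le.2 hc1)
          · exact Or.inl h
          · exact Or.inr h
        have hGR1 : P {ω | ∃ n, T ≤ n ∧ ce ≤ R T n ω} ≤ ce⁻¹ := by
          have h1 := ville_fwd (hR T hT) hF₁ hQfwd ce
          calc P {ω | ∃ n, T ≤ n ∧ ce ≤ R T n ω}
              = ce⁻¹ * (ce * P {ω | ∃ n, T ≤ n ∧ ce ≤ R T n ω}) := by
                rw [← mul_assoc, ENNReal.inv_mul_cancel hce0 hcetop, one_mul]
            _ ≤ ce⁻¹ * 1 := mul_le_mul_right h1 _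
            _ = ce⁻¹ := mul_one _
        have hGS1 : P {ω | ∃ n, 1 ≤ n ∧ n < T ∧ ce ≤ S T n ω} ≤ ce⁻¹ := by
          by_cases hT2 : 2 ≤ T
          · have h1 := ville_bwd (hS T hT) hT2 hF₀ hQbwd ce
            calc P {ω | ∃ n, 1 ≤ n ∧ n < T ∧ ce ≤ S T n ω}
                = ce⁻¹ * (ce * P {ω | ∃ n, 1 ≤ n ∧ n < T ∧ ce ≤ S T n ω}) := by
                  rw [← mul_assoc, ENNReal.inv_mul_cancel hce0 hcetop, one_mul]
              _ ≤ ce⁻¹ * 1 := mul_le_mul_right h1 _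
              _ = ce⁻¹ := mul_one _
          · have : {ω | ∃ n, 1 ≤ n ∧ n < T ∧ ce ≤ S T n ω} = ∅ := by
              ext ω; simp only [mem_setOf_eq, mem_empty_iff_false, iff_false]
              rintro ⟨n, h1, h2, -⟩; omega
            rw [this]; simp
        have hval : (2 : ℝ≥0∞) * ce⁻¹ = ENNReal.ofReal (α * r T a) := by
          rw [hcedef, ← ENNReal.ofReal_inv_of_pos hcpos]
          rw [show (2 : ℝ≥0∞) = ENNReal.ofReal 2 by simp]
          rw [← ENNReal.ofReal_mul (by norm_num)]
          congr 1
          rw [hcfdef]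
          field_simp
        calc P {ω | (ω, a) ∈ D}
            ≤ P ({ω | ∃ n, T ≤ n ∧ ce ≤ R T n ω} ∪ {ω | ∃ n, 1 ≤ n ∧ n < T ∧ ce ≤ S T n ω}) :=
              measure_mono hsub2
          _ ≤ P {ω | ∃ n, T ≤ n ∧ ce ≤ R T n ω} +
              P {ω | ∃ n, 1 ≤ n ∧ n < T ∧ ce ≤ S T n ω} := measure_union_le _ _
          _ ≤ ce⁻¹ + ce⁻¹ := add_le_add hGR1 hGS1
          _ = 2 * ce⁻¹ := (two_mul _).symm
          _ = ENNReal.ofReal (α * r T a) := hval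
  -- the target sets
  set Bset : Set ((ℕ → 𝒳) × Ωa) := {q | (T : ℕ∞) ≤ τ q.1} with hBsetdef
  set Aset : Set ((ℕ → 𝒳) × Ωa) := {q : (ℕ → 𝒳) × Ωa |
    T ∈ {t : ℕ | 1 ≤ t ∧ (t : ℕ∞) ≤ τ q.1 ∧
      eStat τ That R S t q.1 < ((2 / (α * r t q.2) : ℝ) : EReal)}} with hAsetdef
  -- the key inclusion
  have hsub : Bset ∩ Asetᶜ ⊆ (univ ×ˢ Z) ∪ D := by
    rintro ⟨ω, a⟩ ⟨hB, hA⟩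
    simp only [hBsetdef, mem_setOf_eq] at hB
    simp only [hAsetdef, mem_compl_iff, mem_setOf_eq, not_and, not_lt] at hA
    have hge : ((2 / (α * r T a) : ℝ) : EReal) ≤ eStat τ That R S T ω := hA hT hB
    have hτne : τ ω ≠ ⊤ := by
      intro htop
      have hbot : eStat τ That R S T ω = ⊥ := by
        simp [eStat, htop]
      rw [hbot] at hge
      exact absurd hge (not_le.2 (EReal.bot_lt_coe _))
    by_cases hra : 0 < r T a
    · right
      refine ⟨hra, ?_⟩
      have hstat : eStat τ That R S T ω =
          (if T < That ω then ((R T (That ω - 1) ω : ℝ≥0∞) : EReal)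
           else if T = That ω then 1
           else ((S T (That ω) ω : ℝ≥0∞) : EReal)) := if_pos ⟨hB, hτne⟩
      rcases lt_trichotomy T (That ω) with h1 | h2 | h3
      · left; right
        rw [hstat, if_pos h1] at hge
        exact ⟨That ω - 1, by omega, coe_le_coe_ennreal hge⟩
      · left; left
        rw [hstat, if_neg (show ¬ T < That ω by omega), if_pos h2] at hge
        refine ⟨?_, hB⟩
        have : ((2 / (α * r T a) : ℝ) : EReal) ≤ ((1 : ℝ) : EReal) := by
          rw [EReal.coe_one]; exact hge
        exact_mod_cast this
      · right
        rw [hstat, if_neg (by omega), if_neg (by omega)] at hge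
        exact ⟨That ω, (hThat ω hτne).1, h3, coe_le_coe_ennreal hge⟩
    · left
      exact ⟨mem_univ ω, hra⟩
  -- measure of the failure event
  have hmain : (P.prod μa) (Bset ∩ Asetᶜ) ≤ ENNReal.ofReal α * P Bω := by
    calc (P.prod μa) (Bset ∩ Asetᶜ) ≤ (P.prod μa) ((univ ×ˢ Z) ∪ D) := measure_mono hsub
      _ ≤ (P.prod μa) (univ ×ˢ Z) + (P.prod μa) D := measure_union_le _ _
      _ = (P.prod μa) D := by
          rw [Measure.prod_prod, hZ0, mul_zero, zero_add]
      _ = ∫⁻ a, P ((fun ω => (ω, a)) ⁻¹' D) ∂μa := Measure.prod_apply_symm hDmeas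
      _ ≤ ∫⁻ a, ENNReal.ofReal (α * r T a) ∂μa := lintegral_mono fun a => hslice a
      _ = ENNReal.ofReal α * ∫⁻ a, ENNReal.ofReal (r T a) ∂μa := by
          simp_rw [ENNReal.ofReal_mul hα0.le]
          rw [lintegral_const_mul _ (Measurable.ennreal_ofReal (hrmeas T))]
      _ = ENNReal.ofReal α * ENNReal.ofReal (∫ a, r T a ∂μa) := by
          rw [← ofReal_integral_eq_lintegral_ofReal (hrint T)
            ((hrpos T).mono fun a h => h.le)]
      _ = ENNReal.ofReal α * Pinfs Bω := by
          rw [hrunb T, ENNReal.ofReal_toReal (measure_ne_top _ _)]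
      _ ≤ ENNReal.ofReal α * P Bω := mul_le_mul_right hPinfsB _
  -- assemble
  have hBprodval : (P.prod μa) Bset = P Bω := by
    have : Bset = Bω ×ˢ univ := by
      ext ⟨ω, a⟩; simp [hBsetdef, hBωdef]
    rw [this, Measure.prod_prod, measure_univ, mul_one]
  have hBsetmeas : MeasurableSet Bset := hBmeasω.preimage measurable_fst
  rw [ProbabilityTheory.cond_apply hBsetmeas]
  have hlower : (1 - ENNReal.ofReal α) * P Bω ≤ (P.prod μa) (Bset ∩ Aset) := by
    have hsplit : (P.prod μa) Bset ≤ (P.prod μa) (Bset ∩ Aset) + (P.prod μa) (Bset ∩ Asetᶜ) := by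
      conv_lhs => rw [show Bset = (Bset ∩ Aset) ∪ (Bset ∩ Asetᶜ) by
        rw [← inter_union_distrib_left, union_compl_self, inter_univ]]
      exact measure_union_le _ _
    have hle : P Bω ≤ (P.prod μa) (Bset ∩ Aset) + ENNReal.ofReal α * P Bω := by
      calc P Bω = (P.prod μa) Bset := hBprodval.symm
        _ ≤ (P.prod μa) (Bset ∩ Aset) + (P.prod μa) (Bset ∩ Asetᶜ) := hsplit
        _ ≤ (P.prod μa) (Bset ∩ Aset) + ENNReal.ofReal α * P Bω := add_le_add_right hmain _
    have h2 : P Bω - ENNReal.ofReal α * P Bω ≤ (P.prod μa) (Bset ∩ Aset) :=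
      tsub_le_iff_right.2 hle
    calc (1 - ENNReal.ofReal α) * P Bω = 1 * P Bω - ENNReal.ofReal α * P Bω := by
          rw [ENNReal.sub_mul fun _ _ => measure_ne_top P Bω]
      _ = P Bω - ENNReal.ofReal α * P Bω := by rw [one_mul]
      _ ≤ (P.prod μa) (Bset ∩ Aset) := h2
  have hbne : P Bω ≠ ⊤ := measure_ne_top _ _
  calc ENNReal.ofReal (1 - α) = 1 - ENNReal.ofReal α := by
        rw [← ENNReal.ofReal_one, ← ENNReal.ofReal_sub _ hα0.le]
    _ = (1 - ENNReal.ofReal α) * ((P Bω)⁻¹ * P Bω) := by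
        rw [ENNReal.inv_mul_cancel hPB0 hbne, mul_one]
    _ = (P Bω)⁻¹ * ((1 - ENNReal.ofReal α) * P Bω) := by ring
    _ ≤ (P Bω)⁻¹ * (P.prod μa) (Bset ∩ Aset) := mul_le_mul_right hlower _
    _ = ((P.prod μa) Bset)⁻¹ * (P.prod μa) (Bset ∩ Aset) := by rw [hBprodval]


end SeqChange
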